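/- Let n, r be integers with 1 < n/2 < r < n and set a = n/r. Then a(n+1)(a^n - (a-1)^n) > n(a^{n+1} - (a-1)^{n+1}). -/

import Mathlib

lemma key_nat (n r : ℕ) (hn : 2 < n) (h2r : n < 2 * r) (h3 : r < n) :
    (r + 1) * (n - r) ^ n < n ^ n := by
  have hm1 : 1 ≤ n - r := Nat.sub_pos_of_lt h3
  have h2m : 2 * (n - r) < n := by omega
  calc (r + 1) * (n - r) ^ n ≤ 2 ^ n * (n - r) ^ n := by
        apply Nat.mul_le_mul_right
        calc r + 1 ≤ n := h3
          _ ≤ 2 ^ n := (Nat.lt_two_pow_self (n := n)).le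
    _ = (2 * (n - r)) ^ n := by rw [mul_pow]
    _ < n ^ n := Nat.pow_lt_pow_left h2m (by omega)

/-- For integers `n, r` with `1 < n/2 < r < n` and `a = n/r`, one has
`a(n+1)(a^n - (a-1)^n) > n(a^(n+1) - (a-1)^(n+1))`. -/
theorem stmt_5 (n r : ℕ) (h1 : (1 : ℚ) < (n : ℚ) / 2) (h2 : (n : ℚ) / 2 < r) (h3 : r < n) :
    (n : ℚ) * (((n : ℚ) / r) ^ (n + 1) - ((n : ℚ) / r - 1) ^ (n + 1)) <
      ((n : ℚ) / r) * ((n : ℚ) + 1) * (((n : ℚ) / r) ^ n - ((n : ℚ) / r - 1) ^ n) := by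
  have hn2 : 2 < n := by exact_mod_cast (by linarith : (2:ℚ) < n)
  have h2r : n < 2 * r := by exact_mod_cast (by linarith : (n:ℚ) < 2 * r)
  have hr0 : 0 < r := by omega
  have key := key_nat n r hn2 h2r h3
  have keyQ : ((r:ℚ) + 1) * ((n:ℚ) - r) ^ n < (n:ℚ) ^ n := by
    have := (Nat.cast_lt (α := ℚ)).mpr key
    push_cast [Nat.cast_sub h3.le] at this
    convert this using 3
  have hrQ : (0:ℚ) < r := by exact_mod_cast hr0
  have hnQ : (0:ℚ) < n := by positivity
  rw [← sub_pos]
  have heq : ((n : ℚ) / r) * ((n : ℚ) + 1) * (((n : ℚ) / r) ^ n - ((n : ℚ) / r - 1) ^ n)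
      - (n : ℚ) * (((n : ℚ) / r) ^ (n + 1) - ((n : ℚ) / r - 1) ^ (n + 1))
      = (n : ℚ) * ((n:ℚ) ^ n - ((r:ℚ) + 1) * ((n:ℚ) - r) ^ n) / (r:ℚ) ^ (n + 1) := by
    rw [div_sub_one (ne_of_gt hrQ), div_pow, div_pow, div_pow, div_pow]
    field_simp
    ring
  rw [heq]
  apply div_pos
  · exact mul_pos hnQ (by linarith)
  · positivity
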